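/- Let 0 ≤ τ_i < τ_j < n and consider the quadratics q_i(μ) = μ(S_n − S_{τ_i}) − (n−τ_i)μ²/2 and q_j(μ) = μ(S_n − S_{τ_j}) − (n−τ_j)μ²/2, both vanishing at μ = 0. Then q_i − q_j is a quadratic through the origin whose μ² coefficient is strictly negative; hence there exists a unique μ* = 2(S_{τ_j} − S_{τ_i})/(τ_j − τ_i) such that q_i(μ) ≥ q_j(μ) for all μ between 0 and μ* (when μ* > 0), and q_j(μ) ≥ q_i(μ) for all μ ≥ μ* ≥ 0. In particular, on μ > 0, a quadratic introduced at a later time can only be optimal for larger values of μ than one introduced earlier. -/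

import Mathlib

/-- Ordering of FOCuS0 quadratics: for `τ_i < τ_j < n`, the difference `q_i − q_j`
is a quadratic through the origin with strictly negative `μ²` coefficient, whose
non-zero root is `μ* = 2(S_{τ_j} − S_{τ_i})/(τ_j − τ_i)`; `q_i ≥ q_j` on `[0, μ*]`
(when `μ* > 0`) and `q_j ≥ q_i` on `[μ*, ∞)` when `μ* ≥ 0`. -/
theorem focus0_quadratic_ordering (n τi τj : ℕ) (h1 : τi < τj) (h2 : τj < n) (x : ℕ → ℝ) :
    let S : ℕ → ℝ := fun t => ∑ k ∈ Finset.Icc 1 t, x k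
    let qi : ℝ → ℝ := fun μ => μ * (S n - S τi) - ((n : ℝ) - τi) * μ ^ 2 / 2
    let qj : ℝ → ℝ := fun μ => μ * (S n - S τj) - ((n : ℝ) - τj) * μ ^ 2 / 2
    let μs : ℝ := 2 * (S τj - S τi) / ((τj : ℝ) - τi)
    qi 0 = 0 ∧ qj 0 = 0 ∧
    (∀ μ : ℝ, qi μ - qj μ = μ * (S τj - S τi) - ((τj : ℝ) - τi) * μ ^ 2 / 2) ∧
    (0 : ℝ) < ((τj : ℝ) - τi) ∧
    (0 < μs → ∀ μ : ℝ, 0 ≤ μ → μ ≤ μs → qj μ ≤ qi μ) ∧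
    (0 ≤ μs → ∀ μ : ℝ, μs ≤ μ → qi μ ≤ qj μ) := by
  intro S qi qj μs
  have hd : (0:ℝ) < (τj:ℝ) - τi := by
    have : (τi:ℝ) < τj := by exact_mod_cast h1
    linarith
  have hμs : μs * ((τj:ℝ) - τi) = 2 * (S τj - S τi) := by
    exact div_mul_cancel₀ _ hd.ne'
  refine ⟨by simp [qi], by simp [qj], fun μ => by ring, hd, ?_, ?_⟩
  · intro hpos μ h0 hle
    simp only [qi, qj]
    nlinarith [mul_nonneg h0 (sub_nonneg.2 hle)]
  · intro hnn μ hge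
    simp only [qi, qj]
    have h0 : 0 ≤ μ := le_trans hnn hge
    nlinarith [mul_nonneg h0 (sub_nonneg.2 hge)]
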